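/- Let G = (V,E) be a finite undirected graph and k, ℓ ∈ ℕ. Define the similarity-caching instance with catalog X = V, retrieval cost C_r = 1, approximation cost C_a(x,y) = 0 if x = y or {x,y} ∈ E, and C_a(x,y) = +∞ otherwise, and a request sequence containing exactly one request per vertex. Then for any static cache S ⊆ V with |S| ≤ k, the total cost incurred equals |V| − |N[S]|, where N[S] is the closed neighborhood of S. Consequently, a set S of size at most k achieves total cost at most |V| − ℓ if and only if |N[S]| ≥ ℓ. -/

import Mathlib

open scoped ENNReal

/-- For a finite graph `G`, with catalog `V`, retrieval cost `C_r = 1`,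
approximation cost `C_a(x,y) = 0` if `x = y` or `x ~ y` and `+∞` otherwise, and one request
per vertex, any static cache `S` with `|S| ≤ k` incurs total cost `|V| - |N[S]|`, and
(for `ℓ ≤ |V|`) its total cost is at most `|V| - ℓ` iff `|N[S]| ≥ ℓ`. -/
theorem stmt10 {V : Type*} [Fintype V] [DecidableEq V]
    (G : SimpleGraph V) [DecidableRel G.Adj]
    (k ℓ : ℕ) (hℓ : ℓ ≤ Fintype.card V)
    (Ca : V → V → ℝ≥0∞)
    (hCa : ∀ x y, Ca x y = if x = y ∨ G.Adj x y then 0 else ⊤)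
    (N : Finset V → Finset V)
    (hN : ∀ S : Finset V,
      N S = S ∪ Finset.univ.filter (fun v => ∃ u ∈ S, G.Adj u v)) :
    ∀ S : Finset V, S.card ≤ k →
      ((∑ v : V, min (⨅ y ∈ S, Ca v y) 1)
          = ((Fintype.card V - (N S).card : ℕ) : ℝ≥0∞) ∧
       ((∑ v : V, min (⨅ y ∈ S, Ca v y) 1) ≤ ((Fintype.card V - ℓ : ℕ) : ℝ≥0∞)
          ↔ ℓ ≤ (N S).card)) := by
  intro S hS
  have hmem : ∀ v : V, v ∈ N S ↔ (v ∈ S ∨ ∃ u ∈ S, G.Adj u v) := by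
    intro v
    rw [hN]
    simp
  have hterm : ∀ v : V, min (⨅ y ∈ S, Ca v y) 1 = if v ∈ N S then 0 else 1 := by
    intro v
    by_cases hv : v ∈ N S
    · simp only [hv, if_true]
      rcases (hmem v).1 hv with h | ⟨u, hu, hadj⟩
      · have : Ca v v = 0 := by rw [hCa]; simp
        have h0 : (⨅ y ∈ S, Ca v y) = 0 := by
          refine le_antisymm ?_ zero_le
          calc (⨅ y ∈ S, Ca v y) ≤ ⨅ _ : v ∈ S, Ca v v := iInf_le _ v
          _ ≤ Ca v v := iInf_le _ h
          _ = 0 := this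
        simp [h0]
      · have : Ca v u = 0 := by rw [hCa]; simp [hadj.symm]
        have h0 : (⨅ y ∈ S, Ca v y) = 0 := by
          refine le_antisymm ?_ zero_le
          calc (⨅ y ∈ S, Ca v y) ≤ ⨅ _ : u ∈ S, Ca v u := iInf_le _ u
          _ ≤ Ca v u := iInf_le _ hu
          _ = 0 := this
        simp [h0]
    · simp only [hv, if_false]
      have htop : (⨅ y ∈ S, Ca v y) = ⊤ := by
        rw [iInf_eq_top]
        intro y
        rw [iInf_eq_top]
        intro hy
        rw [hCa]
        rw [if_neg]
        rintro (rfl | hadj)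
        · exact hv ((hmem _).2 (Or.inl hy))
        · exact hv ((hmem v).2 (Or.inr ⟨y, hy, hadj.symm⟩))
      simp [htop]
  have hsum : (∑ v : V, min (⨅ y ∈ S, Ca v y) 1)
      = ((Fintype.card V - (N S).card : ℕ) : ℝ≥0∞) := by
    calc (∑ v : V, min (⨅ y ∈ S, Ca v y) 1)
        = ∑ v : V, (if v ∈ N S then (0 : ℝ≥0∞) else 1) := by
          exact Finset.sum_congr rfl fun v _ => hterm v
      _ = ((Finset.univ.filter (fun v => ¬ v ∈ N S)).card : ℝ≥0∞) := by
          rw [Finset.sum_ite, Finset.sum_const, Finset.sum_const]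
          simp
      _ = ((Fintype.card V - (N S).card : ℕ) : ℝ≥0∞) := by
          congr 1
          rw [Finset.filter_not, Finset.card_sdiff_of_subset (by simp [Finset.subset_iff])]
          simp
  refine ⟨hsum, ?_⟩
  rw [hsum, Nat.cast_le]
  have hcard : (N S).card ≤ Fintype.card V := Finset.card_le_univ _
  omega
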